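/- Let β < μ_1 and set α_k = (μ_k − β)^{−1/2} for k = 1, …, n. Then for all real numbers u_1, …, u_n the identity (∑_{k=1}^n 1/(μ_k − β))·(∑_{k=1}^n (μ_k − β)·α_k·u_k³) + (∑_{k=1}^n β/(μ_k − β))·(∑_{k=1}^n α_k·u_k)·(∑_{k=1}^n u_k²) = g(β)·(∑_{k=1}^n α_k·u_k³ + ∑_{1 ≤ i < j ≤ n} (α_i·u_i·u_j² + α_j·u_i²·u_j)) + ∑_{1 ≤ i < j ≤ n} (√(μ_j − β)·u_j + √(μ_i − β)·u_i)·(u_j/√(μ_i − β) − u_i/√(μ_j − β))² holds. Consequently, if u_k ≥ 0 for all k, then the left-hand side is ≥ g(β)·(∑_{k=1}^n α_k·u_k³ + ∑_{1 ≤ i < j ≤ n} (α_i·u_i·u_j² + α_j·u_i²·u_j)). -/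

import Mathlib

open Set Finset

lemma my_sum_split {n : ℕ} (f : Fin n → Fin n → ℝ) :
    ∑ i, ∑ j, f i j
      = (∑ i, f i i) + ∑ i, ∑ j ∈ Finset.univ.filter (fun j => i < j), (f i j + f j i) := by
  have swap : (∑ i, ∑ j ∈ Finset.univ.filter (fun j => j < i), f i j)
      = ∑ i, ∑ j ∈ Finset.univ.filter (fun j => i < j), f j i := by
    rw [Finset.sum_sigma', Finset.sum_sigma']
    refine Finset.sum_nbij' (fun x => ⟨x.2, x.1⟩) (fun x => ⟨x.2, x.1⟩) ?_ ?_
      (fun _ _ => rfl) (fun _ _ => rfl) (fun _ _ => rfl) <;>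
      simp
  have hdecomp : ∀ i : Fin n, (∑ j, f i j)
      = f i i + ∑ j ∈ Finset.univ.filter (fun j => i < j), f i j
          + ∑ j ∈ Finset.univ.filter (fun j => j < i), f i j := by
    intro i
    have h1 : (Finset.univ : Finset (Fin n)) = insert i
        ((Finset.univ.filter (fun j => i < j)) ∪ (Finset.univ.filter (fun j => j < i))) := by
      ext j
      simp only [Finset.mem_univ, Finset.mem_insert, Finset.mem_union, Finset.mem_filter,
        true_and, true_iff, Fin.lt_def, Fin.ext_iff]
      omega
    have hnm : i ∉ (Finset.univ.filter (fun j => i < j)) ∪ (Finset.univ.filter (fun j => j < i)) := by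
      simp
    have hdisj : Disjoint (Finset.univ.filter (fun j => i < j))
        (Finset.univ.filter (fun j : Fin n => j < i)) := by
      rw [Finset.disjoint_left]
      intro a ha hb
      simp only [Finset.mem_filter] at ha hb
      exact absurd (ha.2.trans hb.2) (lt_irrefl i)
    conv_lhs => rw [h1]
    rw [Finset.sum_insert hnm, Finset.sum_union hdisj]
    ring
  calc ∑ i, ∑ j, f i j
      = ∑ i, (f i i + ∑ j ∈ Finset.univ.filter (fun j => i < j), f i j
          + ∑ j ∈ Finset.univ.filter (fun j => j < i), f i j) :=
        Finset.sum_congr rfl fun i _ => hdecomp i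
    _ = (∑ i, f i i) + (∑ i, ∑ j ∈ Finset.univ.filter (fun j => i < j), f i j)
          + (∑ i, ∑ j ∈ Finset.univ.filter (fun j => j < i), f i j) := by
        rw [Finset.sum_add_distrib, Finset.sum_add_distrib]
    _ = (∑ i, f i i) + ((∑ i, ∑ j ∈ Finset.univ.filter (fun j => i < j), f i j)
          + (∑ i, ∑ j ∈ Finset.univ.filter (fun j => i < j), f j i)) := by
        rw [swap]; ring
    _ = (∑ i, f i i) + ∑ i, ∑ j ∈ Finset.univ.filter (fun j => i < j), (f i j + f j i) := by
        congr 1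
        rw [← Finset.sum_add_distrib]
        exact Finset.sum_congr rfl fun i _ => (Finset.sum_add_distrib).symm

/-- The algebraic identity underlying the nonexistence proof: for `β < μ₁`,
`αₖ = (μₖ - β)^{-1/2}` and arbitrary reals `u₁, …, uₙ`, the quantity
`(∑ₖ 1/(μₖ-β))·(∑ₖ (μₖ-β)αₖuₖ³) + (∑ₖ β/(μₖ-β))·(∑ₖ αₖuₖ)·(∑ₖ uₖ²)` equals
`g(β)·(∑ₖ αₖuₖ³ + ∑_{i<j} (αᵢuᵢuⱼ² + αⱼuᵢ²uⱼ))` plus a sum of nonnegative terms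
(when the `uₖ` are nonnegative), giving the stated lower bound. -/
theorem nonexistence_identity (n : ℕ) (hn : 2 ≤ n) (μ : Fin n → ℝ) (hμ : Monotone μ)
    (g : ℝ → ℝ)
    (hg : ∀ β : ℝ, (∀ j, β ≠ μ j) → g β = 1 + β * ∑ j, 1 / (μ j - β))
    (β : ℝ) (hβ : β < μ ⟨0, by omega⟩)
    (α : Fin n → ℝ) (hα : ∀ k, α k = (Real.sqrt (μ k - β))⁻¹) :
    ∀ u : Fin n → ℝ,
      ((∑ k, 1 / (μ k - β)) * (∑ k, (μ k - β) * α k * u k ^ 3)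
        + (∑ k, β / (μ k - β)) * (∑ k, α k * u k) * (∑ k, u k ^ 2)
      = g β * ((∑ k, α k * u k ^ 3)
          + ∑ i, ∑ j ∈ Finset.univ.filter (fun j => i < j),
              (α i * u i * u j ^ 2 + α j * u i ^ 2 * u j))
        + ∑ i, ∑ j ∈ Finset.univ.filter (fun j => i < j),
            (Real.sqrt (μ j - β) * u j + Real.sqrt (μ i - β) * u i)
              * (u j / Real.sqrt (μ i - β) - u i / Real.sqrt (μ j - β)) ^ 2) ∧
      ((∀ k, 0 ≤ u k) →
        g β * ((∑ k, α k * u k ^ 3)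
          + ∑ i, ∑ j ∈ Finset.univ.filter (fun j => i < j),
              (α i * u i * u j ^ 2 + α j * u i ^ 2 * u j))
        ≤ (∑ k, 1 / (μ k - β)) * (∑ k, (μ k - β) * α k * u k ^ 3)
          + (∑ k, β / (μ k - β)) * (∑ k, α k * u k) * (∑ k, u k ^ 2)) := by
  have hpos : ∀ k, 0 < μ k - β := fun k =>
    sub_pos.2 (lt_of_lt_of_le hβ (hμ (by simp [Fin.le_def])))
  have hne : ∀ j, β ≠ μ j := fun j => (ne_of_lt (by linarith [hpos j]))
  have hspos : ∀ k, 0 < Real.sqrt (μ k - β) := fun k => Real.sqrt_pos.2 (hpos k)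
  have hss : ∀ k, Real.sqrt (μ k - β) * Real.sqrt (μ k - β) = μ k - β := fun k =>
    Real.mul_self_sqrt (hpos k).le
  intro u
  -- key1 : the g-multiplied sum is a product of two sums
  have key1 : (∑ k, α k * u k) * (∑ k, u k ^ 2)
      = (∑ k, α k * u k ^ 3)
        + ∑ i, ∑ j ∈ Finset.univ.filter (fun j => i < j),
            (α i * u i * u j ^ 2 + α j * u i ^ 2 * u j) := by
    rw [Finset.sum_mul_sum, my_sum_split]
    congr 1
    · exact Finset.sum_congr rfl fun i _ => by ring
    · exact Finset.sum_congr rfl fun i _ => Finset.sum_congr rfl fun j _ => by ring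
  -- pointwise pair identity
  have pair : ∀ i j : Fin n,
      (1 / (μ i - β)) * ((μ j - β) * α j * u j ^ 3)
        + (1 / (μ j - β)) * ((μ i - β) * α i * u i ^ 3)
      = (α i * u i * (u j ^ 2) + α j * u j * (u i ^ 2))
        + (Real.sqrt (μ j - β) * u j + Real.sqrt (μ i - β) * u i)
            * (u j / Real.sqrt (μ i - β) - u i / Real.sqrt (μ j - β)) ^ 2 := by
    intro i j
    have hi := hspos i
    have hj := hspos j
    rw [hα i, hα j]
    set a := Real.sqrt (μ i - β) with ha
    set b := Real.sqrt (μ j - β) with hb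
    have haa : a * a = μ i - β := hss i
    have hbb : b * b = μ j - β := hss j
    rw [← haa, ← hbb]
    field_simp
    ring
  -- key2 : the main algebraic identity
  have key2 : (∑ k, 1 / (μ k - β)) * (∑ k, (μ k - β) * α k * u k ^ 3)
      = (∑ k, α k * u k) * (∑ k, u k ^ 2)
        + ∑ i, ∑ j ∈ Finset.univ.filter (fun j => i < j),
            (Real.sqrt (μ j - β) * u j + Real.sqrt (μ i - β) * u i)
              * (u j / Real.sqrt (μ i - β) - u i / Real.sqrt (μ j - β)) ^ 2 := by
    rw [Finset.sum_mul_sum, Finset.sum_mul_sum, my_sum_split, my_sum_split]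
    have hdiag : ∀ i : Fin n, 1 / (μ i - β) * ((μ i - β) * α i * u i ^ 3)
        = α i * u i * u i ^ 2 := by
      intro i
      have := (hpos i).ne'
      field_simp
    have hdsum : (∑ i, 1 / (μ i - β) * ((μ i - β) * α i * u i ^ 3))
        = ∑ i, α i * u i * u i ^ 2 := Finset.sum_congr rfl fun i _ => hdiag i
    rw [hdsum]
    have hstep : (∑ i, ∑ j ∈ Finset.univ.filter (fun j => i < j),
          (1 / (μ i - β) * ((μ j - β) * α j * u j ^ 3)
            + 1 / (μ j - β) * ((μ i - β) * α i * u i ^ 3)))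
        = (∑ i, ∑ j ∈ Finset.univ.filter (fun j => i < j),
            (α i * u i * u j ^ 2 + α j * u j * u i ^ 2))
          + ∑ i, ∑ j ∈ Finset.univ.filter (fun j => i < j),
              (Real.sqrt (μ j - β) * u j + Real.sqrt (μ i - β) * u i)
                * (u j / Real.sqrt (μ i - β) - u i / Real.sqrt (μ j - β)) ^ 2 := by
      rw [← Finset.sum_add_distrib]
      refine Finset.sum_congr rfl fun i _ => ?_
      rw [← Finset.sum_add_distrib]
      exact Finset.sum_congr rfl fun j _ => pair i j
    linarith [hstep]
  constructor
  · rw [hg β hne, ← key1]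
    have hβm : (∑ k, β / (μ k - β)) = β * ∑ k, 1 / (μ k - β) := by
      rw [Finset.mul_sum]
      exact Finset.sum_congr rfl fun k _ => by rw [mul_one_div]
    rw [hβm]
    linear_combination key2
  · intro hu
    have hE : 0 ≤ ∑ i, ∑ j ∈ Finset.univ.filter (fun j => i < j),
        (Real.sqrt (μ j - β) * u j + Real.sqrt (μ i - β) * u i)
          * (u j / Real.sqrt (μ i - β) - u i / Real.sqrt (μ j - β)) ^ 2 := by
      refine Finset.sum_nonneg fun i _ => Finset.sum_nonneg fun j _ => ?_
      exact mul_nonneg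
        (add_nonneg (mul_nonneg (Real.sqrt_nonneg _) (hu j))
          (mul_nonneg (Real.sqrt_nonneg _) (hu i))) (sq_nonneg _)
    rw [hg β hne, ← key1]
    have hβm : (∑ k, β / (μ k - β)) = β * ∑ k, 1 / (μ k - β) := by
      rw [Finset.mul_sum]
      exact Finset.sum_congr rfl fun k _ => by rw [mul_one_div]
    rw [hβm]
    nlinarith [key2, hE]
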